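/- arXiv:1607.00243 — 4 statements merged into one kernel-verified Lean document; each statement's English description precedes it below -/
import Mathlib

section
/- In the Killip–Nenciu random Verblunsky model, the family of real random variables ( sup_{|z|=1} log|X_n(z)| − sup_{|z|=1} log|Φ*_{n−1}(z)| )_{n≥1} is tight, where X_n(z) := Φ*_{n−1}(z) − η_n·z·Φ_{n−1}(z). -/
open MeasureTheory ProbabilityTheory
open scoped ENNReal

/-- The Szegő recursion: `szego α k = (Φ_k, Φ*_k)` where
`Φ_0 = Φ*_0 = 1`, `Φ_{k+1}(z) = z Φ_k(z) − conj(α_k) Φ*_k(z)`,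
`Φ*_{k+1}(z) = Φ*_k(z) − α_k z Φ_k(z)`. -/
noncomputable def szego (α : ℕ → ℂ) : ℕ → (ℂ → ℂ) × (ℂ → ℂ)
  | 0 => (fun _ => 1, fun _ => 1)
  | k + 1 =>
      (fun z => z * (szego α k).1 z - (starRingEnd ℂ) (α k) * (szego α k).2 z,
       fun z => (szego α k).2 z - α k * z * (szego α k).1 z)

namespace KNaux

noncomputable def rEnum : ℚ ≃ ℕ := Denumerable.eqv ℚ

noncomputable def dpt (k : ℕ) : ℂ :=
  Complex.exp (((rEnum.symm k : ℚ) : ℝ) * Complex.I)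

lemma abs_dpt (k : ℕ) : norm (dpt k) = 1 := Complex.norm_exp_ofReal_mul_I _

lemma dpt_mem (k : ℕ) : dpt k ∈ Metric.sphere (0 : ℂ) 1 := by
  simp [Metric.mem_sphere, Complex.dist_eq, abs_dpt]

noncomputable def Aof (f : ℂ → ℂ) : ℝ := ⨆ k : ℕ, norm (f (dpt k))

lemma bddAbove_aux {f : ℂ → ℂ} (hf : Continuous f) :
    BddAbove (Set.range fun k => norm (f (dpt k))) := by
  obtain ⟨C, hC⟩ := (isCompact_sphere (0 : ℂ) 1).exists_bound_of_continuousOn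
    hf.continuousOn
  refine ⟨C, ?_⟩
  rintro x ⟨k, rfl⟩
  simpa using hC (dpt k) (dpt_mem k)

lemma le_Aof {f : ℂ → ℂ} (hf : Continuous f) {z : ℂ} (hz : norm z = 1) :
    norm (f z) ≤ Aof f := by
  have hbdd := bddAbove_aux hf
  have hrat : ∀ q : ℚ, norm (f (Complex.exp ((q : ℝ) * Complex.I))) ≤ Aof f := by
    intro q
    have : Complex.exp (((q : ℝ) : ℂ) * Complex.I) = dpt (rEnum q) := by
      rw [dpt, Equiv.symm_apply_apply]
    rw [this]
    exact le_ciSup hbdd _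
  have hclosed : IsClosed {θ : ℝ | norm (f (Complex.exp ((θ : ℂ) * Complex.I))) ≤ Aof f} :=
    isClosed_le (by continuity) continuous_const
  have hsub : Set.range ((↑) : ℚ → ℝ) ⊆
      {θ : ℝ | norm (f (Complex.exp ((θ : ℂ) * Complex.I))) ≤ Aof f} := by
    rintro _ ⟨q, rfl⟩; exact hrat q
  have huniv : {θ : ℝ | norm (f (Complex.exp ((θ : ℂ) * Complex.I))) ≤ Aof f} = Set.univ := by
    have := Rat.denseRange_cast (𝕜 := ℝ)
    have h2 : closure (Set.range ((↑) : ℚ → ℝ)) ⊆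
        {θ : ℝ | norm (f (Complex.exp ((θ : ℂ) * Complex.I))) ≤ Aof f} :=
      hclosed.closure_subset_iff.2 hsub
    rw [this.closure_eq] at h2
    exact Set.eq_univ_of_univ_subset h2
  have harg : Complex.exp ((Complex.arg z : ℂ) * Complex.I) = z := by
    have := Complex.norm_mul_exp_arg_mul_I z
    rwa [hz, Complex.ofReal_one, one_mul] at this
  have := Set.eq_univ_iff_forall.1 huniv (Complex.arg z)
  simpa [harg] using this

lemma one_le_Aof {f : ℂ → ℂ} (hf : Differentiable ℂ f) (h0 : f 0 = 1) : 1 ≤ Aof f := by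
  have h := Complex.norm_le_of_forall_mem_frontier_norm_le (U := Metric.ball (0:ℂ) 1)
    Metric.isBounded_ball hf.diffContOnCl (C := Aof f) ?_ (z := 0) ?_
  · simpa [h0] using h
  · intro z hz
    rw [frontier_ball (0:ℂ) one_ne_zero] at hz
    have : norm z = 1 := by simpa [Complex.dist_eq] using hz
    simpa using le_Aof hf.continuous this
  · rw [closure_ball (0:ℂ) one_ne_zero]; simp

lemma Aof_pos {f : ℂ → ℂ} (hf : Differentiable ℂ f) (h0 : f 0 = 1) : 0 < Aof f :=
  lt_of_lt_of_le one_pos (one_le_Aof hf h0)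

instance : Nonempty (Metric.sphere (0 : ℂ) 1) := ⟨⟨1, by simp⟩⟩

lemma abs_of_mem_sphere (z : Metric.sphere (0 : ℂ) 1) : norm (z : ℂ) = 1 := by
  have := z.2
  simpa [Complex.dist_eq] using this

lemma ciSup_log_eq {f : ℂ → ℂ} (hf : Continuous f) (h1 : 1 ≤ Aof f) :
    (⨆ z : Metric.sphere (0:ℂ) 1, Real.log (norm (f (z : ℂ)))) = Real.log (Aof f) := by
  have hbdd := bddAbove_aux hf
  have hub : ∀ z : Metric.sphere (0:ℂ) 1,
      Real.log (norm (f (z : ℂ))) ≤ Real.log (Aof f) := by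
    intro z
    rcases eq_or_lt_of_le (norm_nonneg (f (z:ℂ))) with h | h
    · simp only [← h, Real.log_zero]
      exact Real.log_nonneg h1
    · exact Real.log_le_log h (le_Aof hf (abs_of_mem_sphere z))
  have hbdd2 : BddAbove (Set.range fun z : Metric.sphere (0:ℂ) 1 =>
      Real.log (norm (f (z : ℂ)))) := by
    refine ⟨Real.log (Aof f), ?_⟩; rintro x ⟨z, rfl⟩; exact hub z
  refine le_antisymm (ciSup_le hub) ?_
  refine le_of_forall_lt fun c hc => ?_
  have h2 : Real.exp c < Aof f := by
    calc Real.exp c < Real.exp (Real.log (Aof f)) := Real.exp_lt_exp.2 hc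
    _ = Aof f := Real.exp_log (lt_of_lt_of_le one_pos h1)
  obtain ⟨k, hk⟩ := exists_lt_of_lt_ciSup h2
  have : c < Real.log (norm (f (dpt k))) := by
    calc c = Real.log (Real.exp c) := (Real.log_exp c).symm
    _ < Real.log (norm (f (dpt k))) := Real.log_lt_log (Real.exp_pos c) hk
  exact lt_of_lt_of_le this (le_ciSup hbdd2 (⟨dpt k, dpt_mem k⟩ : Metric.sphere (0:ℂ) 1))

/-- selection of a near-maximizer index -/
noncomputable def selOf (f : ℂ → ℂ) : ℕ := sInf {k | Aof f - 1/2 ≤ norm (f (dpt k))}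

lemma selOf_nonempty (f : ℂ → ℂ) : {k | Aof f - 1/2 ≤ norm (f (dpt k))}.Nonempty := by
  have : Aof f - 1/2 < ⨆ k : ℕ, norm (f (dpt k)) := by
    have : Aof f - 1/2 < Aof f := by linarith
    simpa [Aof] using this
  obtain ⟨k, hk⟩ := exists_lt_of_lt_ciSup this
  exact ⟨k, hk.le⟩

lemma selOf_spec (f : ℂ → ℂ) : Aof f - 1/2 ≤ norm (f (dpt (selOf f))) :=
  Nat.sInf_mem (selOf_nonempty f)

noncomputable def wOf (p : (ℂ → ℂ) × (ℂ → ℂ)) : ℂ :=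
  dpt (selOf p.2) * p.1 (dpt (selOf p.2)) / p.2 (dpt (selOf p.2))

end KNaux

namespace KNaux

lemma szego_snd_zero (a : ℕ → ℂ) (m : ℕ) : (szego a m).2 0 = 1 := by
  induction m with
  | zero => simp [szego]
  | succ k ih => simp [szego, ih]

lemma szego_diff (a : ℕ → ℂ) (m : ℕ) :
    Differentiable ℂ (szego a m).1 ∧ Differentiable ℂ (szego a m).2 := by
  induction m with
  | zero => exact ⟨differentiable_const 1, differentiable_const 1⟩
  | succ k ih =>
    constructor
    · exact ((differentiable_id.mul ih.1).sub (ih.2.const_mul _) : )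
    · exact (ih.2.sub (((differentiable_const (a k)).mul differentiable_id).mul ih.1) : )

lemma abs_sub_eq {z A B c : ℂ} (hz : norm z = 1) (habs : norm A = norm B) :
    norm (z * A - (starRingEnd ℂ) c * B) = norm (B - c * z * A) := by
  have hA : Complex.normSq A = Complex.normSq B := by
    rw [Complex.normSq_eq_norm_sq, Complex.normSq_eq_norm_sq, habs]
  have hz' : Complex.normSq z = 1 := by rw [Complex.normSq_eq_norm_sq, hz]; norm_num
  have hre : (z * A * (starRingEnd ℂ) ((starRingEnd ℂ) c * B)).re
      = (B * (starRingEnd ℂ) (c * z * A)).re := by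
    have h : B * (starRingEnd ℂ) (c * z * A)
        = (starRingEnd ℂ) (z * A * (starRingEnd ℂ) ((starRingEnd ℂ) c * B)) := by
      simp only [map_mul, Complex.conj_conj]
      ring
    rw [h, Complex.conj_re]
  rw [Complex.norm_def, Complex.norm_def]
  congr 1
  rw [Complex.normSq_sub, Complex.normSq_sub, Complex.normSq_mul, Complex.normSq_mul,
    Complex.normSq_mul, Complex.normSq_mul, Complex.normSq_conj, hz', hA, hre]
  ring

lemma szego_abs_eq (a : ℕ → ℂ) (m : ℕ) {z : ℂ} (hz : norm z = 1) :
    norm ((szego a m).1 z) = norm ((szego a m).2 z) := by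
  induction m with
  | zero => simp [szego]
  | succ k ih =>
    show norm (z * (szego a k).1 z - (starRingEnd ℂ) (a k) * (szego a k).2 z)
      = norm ((szego a k).2 z - a k * z * (szego a k).1 z)
    exact abs_sub_eq hz ih

lemma one_le_Aof_szego (a : ℕ → ℂ) (m : ℕ) : 1 ≤ Aof (szego a m).2 :=
  one_le_Aof (szego_diff a m).2 (szego_snd_zero a m)

lemma abs_P_sel (a : ℕ → ℂ) (m : ℕ) :
    Aof (szego a m).2 / 2 ≤ norm ((szego a m).2 (dpt (selOf (szego a m).2))) := by
  have h1 := one_le_Aof_szego a m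
  have h2 := selOf_spec (szego a m).2
  linarith

lemma P_sel_ne (a : ℕ → ℂ) (m : ℕ) :
    (szego a m).2 (dpt (selOf (szego a m).2)) ≠ 0 := by
  have h1 := one_le_Aof_szego a m
  have h2 := abs_P_sel a m
  intro h
  rw [h] at h2
  simp only [norm_zero] at h2
  linarith

lemma abs_wOf (a : ℕ → ℂ) (m : ℕ) : norm (wOf (szego a m)) = 1 := by
  rw [wOf, norm_div, norm_mul, abs_dpt, one_mul,
    szego_abs_eq a m (abs_dpt _), div_self]
  intro h
  exact P_sel_ne a m (norm_eq_zero.mp h)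

end KNaux
namespace KNaux

/-- The central deterministic estimate. -/
lemma core (a : ℕ → ℂ) (m : ℕ) (v : ℝ) (M : ℝ) (hM2 : 1 + Real.log 2 ≤ M)
    (hM : M ≤ |(⨆ z : Metric.sphere (0:ℂ) 1, Real.log (norm
        ((szego a m).2 (z:ℂ) - Complex.exp (Complex.I * (v:ℝ)) * (z:ℂ) * (szego a m).1 (z:ℂ))))
      - (⨆ z : Metric.sphere (0:ℂ) 1, Real.log (norm ((szego a m).2 (z:ℂ))))|) :
    norm (1 - Complex.exp (Complex.I * (v:ℝ)) * wOf (szego a m)) ≤ 2 * Real.exp (-M) := by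
  set P : ℂ → ℂ := (szego a m).2 with hPdef
  set Q : ℂ → ℂ := (szego a m).1 with hQdef
  set η : ℂ := Complex.exp (Complex.I * (v:ℝ)) with hηdef
  set X : ℂ → ℂ := fun z => P z - η * z * Q z with hXdef
  have hη : norm η = 1 := by
    rw [hηdef, Complex.norm_exp]
    norm_num [Complex.mul_re]
  have hPdiff : Differentiable ℂ P := (szego_diff a m).2
  have hQdiff : Differentiable ℂ Q := (szego_diff a m).1
  have hXdiff : Differentiable ℂ X :=
    hPdiff.sub (((differentiable_const η).mul differentiable_id).mul hQdiff)
  have hX0 : X 0 = 1 := by simp [hXdef, szego_snd_zero a m, hPdef]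
  have hAP : 1 ≤ Aof P := one_le_Aof_szego a m
  have hAX : 1 ≤ Aof X := one_le_Aof hXdiff hX0
  have hSP : (⨆ z : Metric.sphere (0:ℂ) 1, Real.log (norm (P (z:ℂ))))
      = Real.log (Aof P) := ciSup_log_eq hPdiff.continuous hAP
  have hSX : (⨆ z : Metric.sphere (0:ℂ) 1, Real.log (norm (X (z:ℂ))))
      = Real.log (Aof X) := ciSup_log_eq hXdiff.continuous hAX
  rw [show (⨆ z : Metric.sphere (0:ℂ) 1, Real.log (norm
        ((szego a m).2 (z:ℂ) - Complex.exp (Complex.I * (v:ℝ)) * (z:ℂ) * (szego a m).1 (z:ℂ))))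
      = (⨆ z : Metric.sphere (0:ℂ) 1, Real.log (norm (X (z:ℂ)))) from rfl,
    hSX, hSP] at hM
  -- upper bound : Aof X ≤ 2 * Aof P
  have hup : Aof X ≤ 2 * Aof P := by
    refine ciSup_le fun k => ?_
    have h1 : norm (X (dpt k)) ≤ norm (P (dpt k)) + norm (Q (dpt k)) := by
      calc norm (X (dpt k)) ≤ norm (P (dpt k)) + norm (η * dpt k * Q (dpt k)) :=
        (norm_sub_le (E := ℂ) _ _ : )
      _ = norm (P (dpt k)) + norm (Q (dpt k)) := by
        rw [norm_mul, norm_mul, hη, abs_dpt, one_mul, one_mul]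
    have h2 : norm (Q (dpt k)) = norm (P (dpt k)) :=
      szego_abs_eq a m (abs_dpt k)
    have h3 : norm (P (dpt k)) ≤ Aof P := le_ciSup (bddAbove_aux hPdiff.continuous) k
    linarith
  -- identify w
  set z₀ : ℂ := dpt (selOf P) with hz₀def
  set w : ℂ := wOf (szego a m) with hwdef
  have hPz₀ : P z₀ ≠ 0 := P_sel_ne a m
  have hPz₀half : Aof P / 2 ≤ norm (P z₀) := abs_P_sel a m
  have hXz₀ : X z₀ = P z₀ * (1 - η * w) := by
    rw [hwdef, wOf]
    show P z₀ - η * z₀ * Q z₀ = P z₀ * (1 - η * (z₀ * Q z₀ / P z₀))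
    field_simp
  set t : ℝ := norm (1 - η * w) with htdef
  have hlow : Aof P / 2 * t ≤ Aof X := by
    have h1 : norm (X z₀) = norm (P z₀) * t := by rw [hXz₀, norm_mul]
    have h2 : norm (X z₀) ≤ Aof X := le_ciSup (bddAbove_aux hXdiff.continuous) (selOf P)
    nlinarith [norm_nonneg (1 - η * w), norm_nonneg (P z₀)]
  -- turn hM into a lower bound on log AP - log AX
  have hlog2 : Real.log (Aof X) - Real.log (Aof P) ≤ Real.log 2 := by
    have := Real.log_le_log (lt_of_lt_of_le one_pos hAX) hup
    rw [Real.log_mul two_ne_zero (by linarith : Aof P ≠ 0)] at this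
    linarith
  have hMlow : Real.log (Aof X) ≤ Real.log (Aof P) - M := by
    rcases abs_cases (Real.log (Aof X) - Real.log (Aof P)) with ⟨he, _⟩ | ⟨he, _⟩
    · rw [he] at hM
      have : (0:ℝ) < 1 := one_pos
      have hl2 : (0:ℝ) ≤ Real.log 2 := Real.log_nonneg one_le_two
      linarith
    · rw [he] at hM; linarith
  rcases eq_or_lt_of_le (norm_nonneg (1 - η * w)) with h0 | h0
  · rw [htdef, ← h0]
    positivity
  · -- t > 0
    have hAPpos : 0 < Aof P := by linarith
    have htpos : (0:ℝ) < t := h0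
    have h1 : Real.log (Aof P / 2 * t) ≤ Real.log (Aof X) :=
      Real.log_le_log (by positivity) hlow
    have h2 : Real.log (Aof P / 2 * t) = Real.log (Aof P) + Real.log t - Real.log 2 := by
      rw [Real.log_mul (by positivity) (ne_of_gt htpos),
        Real.log_div (ne_of_gt hAPpos) two_ne_zero]
      ring
    have h3 : Real.log t ≤ Real.log 2 - M := by
      rw [h2] at h1
      linarith
    calc t = Real.exp (Real.log t) := (Real.exp_log htpos).symm
    _ ≤ Real.exp (Real.log 2 - M) := Real.exp_le_exp.2 h3
    _ = 2 * Real.exp (-M) := by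
      rw [sub_eq_add_neg, Real.exp_add, Real.exp_log two_pos]

end KNaux
namespace KNaux

lemma szego_congr {a b : ℕ → ℂ} (m : ℕ) (h : ∀ j < m, a j = b j) :
    szego a m = szego b m := by
  induction m with
  | zero => rfl
  | succ k ih =>
    have hk : szego a k = szego b k := ih fun j hj => h j (Nat.lt_succ_of_lt hj)
    show (fun z => z * (szego a k).1 z - (starRingEnd ℂ) (a k) * (szego a k).2 z,
       fun z => (szego a k).2 z - a k * z * (szego a k).1 z) = _
    rw [hk, h k (Nat.lt_succ_self k)]
    rfl

lemma meas_szego (m : ℕ) (z : ℂ) :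
    Measurable (fun a : ℕ → ℂ => (szego a m).1 z) ∧
    Measurable (fun a : ℕ → ℂ => (szego a m).2 z) := by
  induction m with
  | zero => exact ⟨measurable_const, measurable_const⟩
  | succ k ih =>
    constructor
    · exact (measurable_const.mul ih.1).sub
        (((continuous_star.measurable : Measurable (starRingEnd ℂ)).comp
          (measurable_pi_apply k)).mul ih.2)
    · exact ih.2.sub (((measurable_pi_apply k).mul measurable_const).mul ih.1)

lemma meas_A (m : ℕ) : Measurable (fun a : ℕ → ℂ => Aof (szego a m).2) := by
  apply Measurable.iSup
  intro k
  exact continuous_norm.measurable.comp (meas_szego m (dpt k)).2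

lemma meas_sel (m : ℕ) : Measurable (fun a : ℕ → ℂ => selOf (szego a m).2) := by
  apply measurable_to_countable'
  intro k
  have : (fun a : ℕ → ℂ => selOf (szego a m).2) ⁻¹' {k} =
      {a : ℕ → ℂ | Aof (szego a m).2 - 1/2 ≤ norm ((szego a m).2 (dpt k))} ∩
      ⋂ j ∈ Finset.range k,
        {a : ℕ → ℂ | Aof (szego a m).2 - 1/2 ≤ norm ((szego a m).2 (dpt j))}ᶜ := by
    ext a
    simp only [Set.mem_preimage, Set.mem_singleton_iff, Set.mem_inter_iff, Set.mem_iInter,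
      Set.mem_compl_iff, Set.mem_setOf_eq, Finset.mem_range]
    constructor
    · rintro rfl
      refine ⟨selOf_spec _, fun j hj => Nat.notMem_of_lt_sInf hj⟩
    · rintro ⟨h1, h2⟩
      refine le_antisymm (Nat.sInf_le h1) ?_
      by_contra hlt
      push_neg at hlt
      exact h2 _ hlt (Nat.sInf_mem (selOf_nonempty _))
  rw [this]
  have hset : ∀ j : ℕ, MeasurableSet
      {a : ℕ → ℂ | Aof (szego a m).2 - 1/2 ≤ norm ((szego a m).2 (dpt j))} := by
    intro j
    exact measurableSet_le ((meas_A m).sub measurable_const)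
      (continuous_norm.measurable.comp (meas_szego m (dpt j)).2)
  exact (hset k).inter (MeasurableSet.biInter (Set.to_countable _) fun j _ => (hset j).compl)

lemma meas_w (m : ℕ) : Measurable (fun a : ℕ → ℂ => wOf (szego a m)) := by
  have key : Measurable (fun p : (ℕ → ℂ) × ℕ =>
      dpt p.2 * (szego p.1 m).1 (dpt p.2) / (szego p.1 m).2 (dpt p.2)) := by
    apply measurable_from_prod_countable_left
    intro k
    show Measurable fun x : ℕ → ℂ => dpt k * (szego x m).1 (dpt k) / (szego x m).2 (dpt k)
    exact (measurable_const.mul (meas_szego m (dpt k)).1).div (meas_szego m (dpt k)).2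
  have : (fun a : ℕ → ℂ => wOf (szego a m)) = (fun p : (ℕ → ℂ) × ℕ =>
      dpt p.2 * (szego p.1 m).1 (dpt p.2) / (szego p.1 m).2 (dpt p.2)) ∘
      (fun a => (a, selOf (szego a m).2)) := by
    funext a; rfl
  rw [this]
  exact key.comp (measurable_id.prodMk (meas_sel m))

end KNaux
namespace KNaux

lemma abs_one_sub_exp_sq (t : ℝ) :
    (norm (1 - Complex.exp ((t:ℂ) * Complex.I)))^2 = 2 - 2 * Real.cos t := by
  have h : (1 : ℂ) - Complex.exp ((t:ℂ) * Complex.I)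
      = Complex.ofReal (1 - Real.cos t) + Complex.ofReal (- Real.sin t) * Complex.I := by
    rw [Complex.exp_mul_I, ← Complex.ofReal_cos, ← Complex.ofReal_sin]
    push_cast
    ring
  rw [h, Complex.sq_norm, Complex.normSq_add_mul_I]
  nlinarith [Real.sin_sq_add_cos_sq t]

lemma arccos_le_arccos' {x y : ℝ} (h : x ≤ y) : Real.arccos y ≤ Real.arccos x := by
  simp only [Real.arccos]
  linarith [Real.monotone_arcsin h]

lemma arc_subset {w : ℂ} (hw : norm w = 1) {δ : ℝ} (hδ2 : δ ≤ 2) :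
    {v : ℝ | v ∈ Set.Ico 0 (2*Real.pi) ∧
        norm (1 - Complex.exp (Complex.I * v) * w) ≤ δ}
    ⊆ Metric.closedBall (-w.arg) (Real.arccos (1 - δ^2/2)) ∪
      Metric.closedBall (2*Real.pi - w.arg) (Real.arccos (1 - δ^2/2)) := by
  intro v hv
  obtain ⟨⟨hv0, hv2π⟩, hv2⟩ := hv
  set θ := w.arg with hθdef
  set r := Real.arccos (1 - δ^2/2) with hrdef
  have hθ1 : -Real.pi < θ := Complex.neg_pi_lt_arg w
  have hθ2 : θ ≤ Real.pi := Complex.arg_le_pi w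
  have hπ := Real.pi_pos
  have hw' : w = Complex.exp ((θ:ℂ) * Complex.I) := by
    have h := Complex.norm_mul_exp_arg_mul_I w
    rw [hw, Complex.ofReal_one, one_mul] at h
    exact h.symm
  have hprod : Complex.exp (Complex.I * v) * w = Complex.exp (((v + θ : ℝ):ℂ) * Complex.I) := by
    rw [hw', ← Complex.exp_add]
    congr 1
    push_cast
    ring
  rw [hprod] at hv2
  have hcos : 1 - δ^2/2 ≤ Real.cos (v + θ) := by
    have h1 : (norm (1 - Complex.exp (((v+θ:ℝ):ℂ) * Complex.I)))^2 ≤ δ^2 :=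
      pow_le_pow_left₀ (norm_nonneg _) hv2 2
    rw [abs_one_sub_exp_sq] at h1
    linarith
  rcases le_or_gt (v + θ) Real.pi with ht | ht
  · left
    rw [Metric.mem_closedBall, Real.dist_eq]
    have habs : |v + θ| ≤ Real.pi := abs_le.2 ⟨by linarith, ht⟩
    have : |v + θ| = Real.arccos (Real.cos (v + θ)) := by
      rw [← Real.cos_abs (v + θ), Real.arccos_cos (abs_nonneg _) habs]
    have h2 : |v + θ| ≤ r := by
      rw [this, hrdef]
      exact arccos_le_arccos' hcos
    have : v - -θ = v + θ := by ring
    rwa [this]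
  · right
    rw [Metric.mem_closedBall, Real.dist_eq]
    have hcos2 : 1 - δ^2/2 ≤ Real.cos (v + θ - 2*Real.pi) := by
      rwa [Real.cos_sub_two_pi]
    have habs : |v + θ - 2*Real.pi| ≤ Real.pi := abs_le.2 ⟨by linarith, by linarith⟩
    have heq : |v + θ - 2*Real.pi| = Real.arccos (Real.cos (v + θ - 2*Real.pi)) := by
      rw [← Real.cos_abs, Real.arccos_cos (abs_nonneg _) habs]
    have h2 : |v + θ - 2*Real.pi| ≤ r := by
      rw [heq, hrdef]
      exact arccos_le_arccos' hcos2
    have : v - (2*Real.pi - θ) = v + θ - 2*Real.pi := by ring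
    rwa [this]

end KNaux
namespace KNaux

lemma iIndepFun_congr {Ω ι : Type*} [MeasurableSpace Ω] {μ : MeasureTheory.Measure Ω}
    {β : ι → Type*} [m : ∀ i, MeasurableSpace (β i)] {f g : ∀ i, Ω → β i}
    (hf : iIndepFun f μ) (h : ∀ i, f i =ᵐ[μ] g i) : iIndepFun g μ := by
  rw [iIndepFun_iff_measure_inter_preimage_eq_mul] at hf ⊢
  intro S sets hsets
  have hone : ∀ i, μ (g i ⁻¹' sets i) = μ (f i ⁻¹' sets i) := fun i =>
    measure_congr (Filter.eventuallyEq_set.2 ((h i).mono fun ω hω => by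
      simp only [Set.mem_preimage, hω]))
  have hint : μ (⋂ i ∈ S, g i ⁻¹' sets i) = μ (⋂ i ∈ S, f i ⁻¹' sets i) := by
    apply measure_congr
    apply Filter.eventuallyEq_set.2
    have hae : ∀ᵐ ω ∂μ, ∀ i ∈ S, f i ω = g i ω :=
      (Filter.eventually_all_finset S).2 fun i _ => h i
    filter_upwards [hae] with ω hω
    simp only [Set.mem_iInter, Set.mem_preimage]
    constructor
    · intro hgg i hi
      rw [hω i hi]
      exact hgg i hi
    · intro hff i hi
      rw [← hω i hi]
      exact hff i hi
  rw [hint, hf S hsets]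
  exact Finset.prod_congr rfl fun i _ => (hone i).symm

lemma key_prob {Ω : Type*} [MeasurableSpace Ω] (μ : MeasureTheory.Measure Ω)
    [MeasureTheory.IsProbabilityMeasure μ]
    (W g : Ω → ℂ) (hW : Measurable W) (hg : Measurable g) (hInd : IndepFun W g μ)
    (hWunit : ∀ ω, norm (W ω) = 1)
    (hlaw : μ.map g = MeasureTheory.Measure.map (fun v : ℝ => Complex.exp (Complex.I * v))
        ((ENNReal.ofReal (2*Real.pi))⁻¹ • volume.restrict (Set.Ico (0:ℝ) (2*Real.pi))))
    {δ : ℝ} (hδ2 : δ ≤ 2) :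
    μ {ω | norm (1 - g ω * W ω) ≤ δ} ≤
      ENNReal.ofReal ((2/Real.pi) * Real.arccos (1 - δ^2/2)) := by
  have hπ := Real.pi_pos
  set r := Real.arccos (1 - δ^2/2) with hrdef
  have hr0 : 0 ≤ r := Real.arccos_nonneg _
  set s : Set (ℂ × ℂ) := {p : ℂ × ℂ | norm (1 - p.2 * p.1) ≤ δ} with hsdef
  have hs : MeasurableSet s := by
    have : IsClosed s := isClosed_le (by continuity) continuous_const
    exact this.measurableSet
  have hexpI : Measurable (fun v : ℝ => Complex.exp (Complex.I * v)) :=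
    Complex.continuous_exp.measurable.comp (measurable_const.mul Complex.measurable_ofReal)
  -- slice bound
  have hslice : ∀ x : ℂ, norm x = 1 →
      (μ.map g) (Prod.mk x ⁻¹' s) ≤ ENNReal.ofReal ((2/Real.pi) * r) := by
    intro x hx
    have hA : MeasurableSet {u : ℂ | norm (1 - u * x) ≤ δ} :=
      (isClosed_le (by continuity) continuous_const).measurableSet
    have hpre : Prod.mk x ⁻¹' s = {u : ℂ | norm (1 - u * x) ≤ δ} := rfl
    rw [hpre, hlaw, MeasureTheory.Measure.map_apply hexpI hA,
      MeasureTheory.Measure.smul_apply, smul_eq_mul,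
      MeasureTheory.Measure.restrict_apply (hexpI hA)]
    have hsub : (fun v : ℝ => Complex.exp (Complex.I * v)) ⁻¹'
          {u : ℂ | norm (1 - u * x) ≤ δ} ∩ Set.Ico (0:ℝ) (2*Real.pi)
        ⊆ Metric.closedBall (-x.arg) r ∪ Metric.closedBall (2*Real.pi - x.arg) r := by
      intro v hv
      exact arc_subset hx hδ2 ⟨hv.2, hv.1⟩
    have hm : volume ((fun v : ℝ => Complex.exp (Complex.I * v)) ⁻¹'
          {u : ℂ | norm (1 - u * x) ≤ δ} ∩ Set.Ico (0:ℝ) (2*Real.pi))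
        ≤ ENNReal.ofReal (2*r) + ENNReal.ofReal (2*r) := by
      refine le_trans (measure_mono hsub) (le_trans (measure_union_le _ _) ?_)
      rw [Real.volume_closedBall, Real.volume_closedBall]
    refine le_trans (mul_le_mul_right hm _) ?_
    rw [← ENNReal.ofReal_add (by linarith) (by linarith)]
    have h4 : (2*r) + (2*r) = 4*r := by ring
    rw [h4]
    calc (ENNReal.ofReal (2*Real.pi))⁻¹ * ENNReal.ofReal (4*r)
        = ENNReal.ofReal (4*r) / ENNReal.ofReal (2*Real.pi) := by
          rw [div_eq_mul_inv, mul_comm]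
      _ = ENNReal.ofReal ((4*r) / (2*Real.pi)) :=
          (ENNReal.ofReal_div_of_pos (by linarith)).symm
      _ = ENNReal.ofReal ((2/Real.pi) * r) := by
          congr 1
          field_simp
          ring
      _ ≤ ENNReal.ofReal ((2/Real.pi) * r) := le_rfl
  -- outer computation
  have hpair : Measurable fun ω => (W ω, g ω) := hW.prodMk hg
  have h1 : {ω | norm (1 - g ω * W ω) ≤ δ} = (fun ω => (W ω, g ω)) ⁻¹' s := rfl
  rw [h1, ← MeasureTheory.Measure.map_apply hpair hs,
    (indepFun_iff_map_prod_eq_prod_map_map hW.aemeasurable hg.aemeasurable).1 hInd,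
    MeasureTheory.Measure.prod_apply hs]
  have hunitset : MeasurableSet {x : ℂ | norm x = 1} :=
    continuous_norm.measurable (measurableSet_singleton 1)
  have hae : ∀ᵐ x ∂(μ.map W), norm x = 1 :=
    (MeasureTheory.ae_map_iff hW.aemeasurable hunitset).2 (MeasureTheory.ae_of_all μ hWunit)
  haveI : MeasureTheory.IsProbabilityMeasure (μ.map W) :=
    MeasureTheory.Measure.isProbabilityMeasure_map hW.aemeasurable
  calc ∫⁻ x, (μ.map g) (Prod.mk x ⁻¹' s) ∂(μ.map W)
      ≤ ∫⁻ _x, ENNReal.ofReal ((2/Real.pi) * r) ∂(μ.map W) :=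
        MeasureTheory.lintegral_mono_ae (hae.mono fun x hx => hslice x hx)
    _ = ENNReal.ofReal ((2/Real.pi) * r) := by
        rw [MeasureTheory.lintegral_const, MeasureTheory.measure_univ, mul_one]

end KNaux

set_option maxHeartbeats 2000000 in
open KNaux in
/-- In the Killip–Nenciu random Verblunsky model, with `α_j = √(B_j) e^{i U_j}`
(`B_j` Beta(1, β(j+1)/2), `U_j` uniform on `[0,2π)`) and `η_n = e^{i V_n}` uniform on the
unit circle, all independent, the family
`( sup_{|z|=1} log|X_n(z)| − sup_{|z|=1} log|Φ*_{n−1}(z)| )_{n ≥ 1}` is tight, where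
`X_n(z) = Φ*_{n−1}(z) − η_n z Φ_{n−1}(z)`. -/
theorem killip_nenciu_sup_diff_tight
    {Ω : Type*} [MeasurableSpace Ω] (μ : Measure Ω) [IsProbabilityMeasure μ]
    (β : ℝ) (hβ : 0 < β)
    (B U V : ℕ → Ω → ℝ)
    (hindep : iIndepFun (Sum.elim B (Sum.elim U V)) μ)
    (hB : ∀ j, μ.map (B j) = (volume.restrict (Set.Icc (0:ℝ) 1)).withDensity
        (fun x => ENNReal.ofReal ((β * (j + 1) / 2) * (1 - x) ^ (β * (j + 1) / 2 - 1))))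
    (hU : ∀ j, μ.map (U j) =
        (ENNReal.ofReal (2 * Real.pi))⁻¹ • volume.restrict (Set.Ico (0:ℝ) (2 * Real.pi)))
    (hV : ∀ n, μ.map (V n) =
        (ENNReal.ofReal (2 * Real.pi))⁻¹ • volume.restrict (Set.Ico (0:ℝ) (2 * Real.pi))) :
    ∀ ε : ℝ, 0 < ε → ∃ M : ℝ, ∀ n : ℕ, 1 ≤ n →
      μ {ω | M ≤
        |(⨆ z : Metric.sphere (0:ℂ) 1, Real.log (norm
            ((szego (fun j => (Real.sqrt (B j ω) : ℂ) *
                Complex.exp (Complex.I * (U j ω))) (n - 1)).2 (z:ℂ)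
              - Complex.exp (Complex.I * (V n ω)) * (z:ℂ) *
                (szego (fun j => (Real.sqrt (B j ω) : ℂ) *
                  Complex.exp (Complex.I * (U j ω))) (n - 1)).1 (z:ℂ))))
          - (⨆ z : Metric.sphere (0:ℂ) 1, Real.log (norm
            ((szego (fun j => (Real.sqrt (B j ω) : ℂ) *
                Complex.exp (Complex.I * (U j ω))) (n - 1)).2 (z:ℂ))))|}
        ≤ ENNReal.ofReal ε := by
  classical
  intro ε hε
  have hπ := Real.pi_pos
  -- choose δ
  have hcont : ContinuousAt (fun d : ℝ => (2/Real.pi) * Real.arccos (1 - d^2/2)) 0 :=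
    (continuousAt_const.mul ((Real.continuous_arccos.comp (by continuity)).continuousAt))
  have hF0 : (2/Real.pi) * Real.arccos (1 - (0:ℝ)^2/2) = 0 := by
    norm_num [Real.arccos_one]
  have hev : ∀ᶠ d : ℝ in nhds 0, (2/Real.pi) * Real.arccos (1 - d^2/2) < ε := by
    apply Filter.Tendsto.eventually_lt_const hε
    have ht := hcont.tendsto
    rwa [hF0] at ht
  obtain ⟨δ₀, hδ₀pos, hδ₀⟩ := Metric.eventually_nhds_iff.1 hev
  set δ : ℝ := min (δ₀/2) 2 with hδdef
  have hδ0 : 0 < δ := lt_min (by linarith) two_pos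
  have hδ2 : δ ≤ 2 := min_le_right _ _
  have hδε : (2/Real.pi) * Real.arccos (1 - δ^2/2) < ε := by
    apply hδ₀
    rw [Real.dist_eq, sub_zero, abs_of_pos hδ0]
    calc δ ≤ δ₀/2 := min_le_left _ _
    _ < δ₀ := by linarith
  -- choose M
  refine ⟨max (1 + Real.log 2) (Real.log (2/δ)), fun n hn => ?_⟩
  set M : ℝ := max (1 + Real.log 2) (Real.log (2/δ)) with hMdef
  have hM2 : 1 + Real.log 2 ≤ M := le_max_left _ _
  have hMδ : 2 * Real.exp (-M) ≤ δ := by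
    have h1 : Real.exp (-M) ≤ Real.exp (-(Real.log (2/δ))) :=
      Real.exp_le_exp.2 (neg_le_neg (le_max_right _ _))
    have h2 : Real.exp (-(Real.log (2/δ))) = δ/2 := by
      rw [Real.exp_neg, Real.exp_log (by positivity), inv_div]
    rw [h2] at h1
    linarith
  set m : ℕ := n - 1 with hmdef
  -- ae-measurable modifications
  set f : (ℕ ⊕ (ℕ ⊕ ℕ)) → Ω → ℝ := Sum.elim B (Sum.elim U V) with hfdef
  have haem : ∀ i, AEMeasurable (f i) μ := by
    have hUV : ∀ (W' : ℕ → Ω → ℝ) (k : ℕ), (μ.map (W' k) =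
        (ENNReal.ofReal (2 * Real.pi))⁻¹ • volume.restrict (Set.Ico (0:ℝ) (2 * Real.pi))) →
        AEMeasurable (W' k) μ := by
      intro W' k hWk
      by_contra hcon
      have h0 : (0 : Measure ℝ) = (ENNReal.ofReal (2 * Real.pi))⁻¹ •
          volume.restrict (Set.Ico (0:ℝ) (2 * Real.pi)) := by
        rw [← hWk, Measure.map_of_not_aemeasurable hcon]
      have h1 := congrArg (fun ν : Measure ℝ => ν (Set.Ico (0:ℝ) (2*Real.pi))) h0
      simp only [Measure.coe_zero, Pi.zero_apply, Measure.smul_apply, smul_eq_mul,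
        Measure.restrict_apply measurableSet_Ico, Set.inter_self, Real.volume_Ico,
        sub_zero] at h1
      rw [ENNReal.inv_mul_cancel (ENNReal.ofReal_pos.2 (by positivity)).ne' ENNReal.ofReal_ne_top] at h1
      exact zero_ne_one h1
    rintro (j | j | j)
    · -- Beta variables
      show AEMeasurable (B j) μ
      by_contra hcon
      set c : ℝ := β * (j + 1) / 2 with hc
      have hcpos : 0 < c := by positivity
      have h0 : (0 : Measure ℝ) = (volume.restrict (Set.Icc (0:ℝ) 1)).withDensity
          (fun x => ENNReal.ofReal (c * (1 - x) ^ (c - 1))) := by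
        rw [← hB j, Measure.map_of_not_aemeasurable hcon]
      have h1 := congrArg (fun ν : Measure ℝ => ν Set.univ) h0
      simp only [Measure.coe_zero, Pi.zero_apply] at h1
      rw [withDensity_apply _ MeasurableSet.univ, setLIntegral_univ] at h1
      set c₀ : ℝ≥0∞ := ENNReal.ofReal (c * min ((1/2:ℝ) ^ (c - 1)) 1) with hc₀
      have hc₀pos : 0 < c₀ := by
        rw [hc₀]
        apply ENNReal.ofReal_pos.2
        have hp : 0 < (1/2:ℝ) ^ (c-1) := Real.rpow_pos_of_pos (by norm_num) _
        have h01 : (0:ℝ) < min ((1/2:ℝ) ^ (c - 1)) 1 := lt_min hp one_pos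
        positivity
      have hpoint : ∀ x : ℝ, Set.indicator (Set.Icc (0:ℝ) (1/2)) (fun _ => c₀) x ≤
          ENNReal.ofReal (c * (1 - x) ^ (c - 1)) := by
        intro x
        by_cases hx : x ∈ Set.Icc (0:ℝ) (1/2)
        · rw [Set.indicator_of_mem hx]
          obtain ⟨hx0, hx1⟩ := hx
          apply ENNReal.ofReal_le_ofReal
          have hbase0 : (1/2:ℝ) ≤ 1 - x := by linarith
          have hb1 : 1 - x ≤ 1 := by linarith
          rcases le_or_gt (c-1) 0 with he | he
          · have h1' : (1:ℝ) ≤ (1-x) ^ (c-1) :=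
              Real.one_le_rpow_of_pos_of_le_one_of_nonpos (by linarith) hb1 he
            have h2' := min_le_right ((1/2:ℝ) ^ (c - 1)) 1
            nlinarith
          · have h1' : (1/2:ℝ) ^ (c-1) ≤ (1-x) ^ (c-1) :=
              Real.rpow_le_rpow (by norm_num) hbase0 he.le
            have h2' := min_le_left ((1/2:ℝ) ^ (c - 1)) 1
            nlinarith
        · rw [Set.indicator_of_notMem hx]
          exact zero_le
      have hlb : c₀ * ENNReal.ofReal (1/2) ≤
          ∫⁻ x, ENNReal.ofReal (c * (1 - x) ^ (c - 1)) ∂(volume.restrict (Set.Icc (0:ℝ) 1)) := by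
        have hmono := lintegral_mono (μ := volume.restrict (Set.Icc (0:ℝ) 1)) hpoint
        rwa [lintegral_indicator_const measurableSet_Icc,
          Measure.restrict_apply measurableSet_Icc,
          Set.inter_eq_self_of_subset_left (Set.Icc_subset_Icc_right (by norm_num)),
          Real.volume_Icc, sub_zero] at hmono
      rw [← h1] at hlb
      have hpos : 0 < c₀ * ENNReal.ofReal (1/2) :=
        ENNReal.mul_pos hc₀pos.ne' (ENNReal.ofReal_pos.2 (by norm_num)).ne'
      exact (lt_irrefl (0:ℝ≥0∞) (lt_of_lt_of_le hpos hlb)).elim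
    · exact hUV U j (hU j)
    · exact hUV V j (hV j)
  -- measurable modifications
  set f' : (ℕ ⊕ (ℕ ⊕ ℕ)) → Ω → ℝ := fun i => (haem i).mk (f i) with hf'def
  have hf'meas : ∀ i, Measurable (f' i) := fun i => (haem i).measurable_mk
  have hf'eq : ∀ i, f i =ᵐ[μ] f' i := fun i => (haem i).ae_eq_mk
  have hindep' : iIndepFun f' μ := iIndepFun_congr hindep hf'eq
  -- finite index sets
  set S : Finset (ℕ ⊕ (ℕ ⊕ ℕ)) := ((Finset.range m).image Sum.inl) ∪
    ((Finset.range m).image (fun j => Sum.inr (Sum.inl j))) with hS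
  set T : Finset (ℕ ⊕ (ℕ ⊕ ℕ)) := {Sum.inr (Sum.inr n)} with hT
  have hST : Disjoint S T := by
    rw [Finset.disjoint_right]
    intro x hxT hxS
    rw [hT, Finset.mem_singleton] at hxT
    subst hxT
    rw [hS, Finset.mem_union] at hxS
    rcases hxS with h | h <;> simp only [Finset.mem_image, Finset.mem_range] at h <;>
      obtain ⟨j, _, hj⟩ := h <;> simp at hj
  have hmem1 : ∀ j, j < m → Sum.inl j ∈ S := fun j h => by
    rw [hS]
    exact Finset.mem_union_left _ (Finset.mem_image_of_mem _ (Finset.mem_range.mpr h))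
  have hmem2 : ∀ j, j < m → Sum.inr (Sum.inl j) ∈ S := fun j h => by
    rw [hS]
    exact Finset.mem_union_right _ (Finset.mem_image_of_mem _ (Finset.mem_range.mpr h))
  have hmemT : Sum.inr (Sum.inr n) ∈ T := by rw [hT]; exact Finset.mem_singleton_self _
  -- the selected-point and phase functions
  set aOf : ({x // x ∈ S} → ℝ) → (ℕ → ℂ) := fun x j =>
    if h : j < m then
      (Real.sqrt (x ⟨Sum.inl j, hmem1 j h⟩) : ℂ) *
        Complex.exp (Complex.I * (x ⟨Sum.inr (Sum.inl j), hmem2 j h⟩ : ℝ))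
    else 0 with haOf
  have haOfmeas : Measurable aOf := by
    apply measurable_pi_lambda
    intro j
    by_cases h : j < m
    · simp only [haOf, dif_pos h]
      exact ((Complex.measurable_ofReal.comp
          (Real.continuous_sqrt.measurable.comp (measurable_pi_apply _))).mul
        (Complex.continuous_exp.measurable.comp
          (measurable_const.mul (Complex.measurable_ofReal.comp (measurable_pi_apply _)))))
    · simp only [haOf, dif_neg h]
      exact measurable_const
  have hφ : Measurable (fun x : {i // i ∈ S} → ℝ => wOf (szego (aOf x) m)) :=
    (meas_w m).comp haOfmeas
  have hψ : Measurable (fun y : {i // i ∈ T} → ℝ =>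
      Complex.exp (Complex.I * (y ⟨Sum.inr (Sum.inr n), hmemT⟩ : ℝ))) :=
    Complex.continuous_exp.measurable.comp
      (measurable_const.mul (Complex.measurable_ofReal.comp (measurable_pi_apply _)))
  set W : Ω → ℂ := (fun x : {i // i ∈ S} → ℝ => wOf (szego (aOf x) m)) ∘
    (fun ω (i : {x // x ∈ S}) => f' i ω) with hW
  set g : Ω → ℂ := (fun y : {i // i ∈ T} → ℝ =>
      Complex.exp (Complex.I * (y ⟨Sum.inr (Sum.inr n), hmemT⟩ : ℝ))) ∘
    (fun ω (i : {x // x ∈ T}) => f' i ω) with hg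
  have htupS : Measurable (fun ω (i : {x // x ∈ S}) => f' i ω) :=
    measurable_pi_lambda _ fun i => hf'meas i
  have htupT : Measurable (fun ω (i : {x // x ∈ T}) => f' i ω) :=
    measurable_pi_lambda _ fun i => hf'meas i
  have hWmeas : Measurable W := hφ.comp htupS
  have hgmeas : Measurable g := hψ.comp htupT
  have hIndWg : IndepFun W g μ :=
    (hindep'.indepFun_finset S T hST hf'meas).comp hφ hψ
  have hWunit : ∀ ω, norm (W ω) = 1 := fun ω => abs_wOf _ m
  have hlawg : μ.map g = Measure.map (fun v : ℝ => Complex.exp (Complex.I * v))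
      ((ENNReal.ofReal (2*Real.pi))⁻¹ • volume.restrict (Set.Ico (0:ℝ) (2*Real.pi))) := by
    have hexpI : Measurable (fun v : ℝ => Complex.exp (Complex.I * v)) :=
      Complex.continuous_exp.measurable.comp (measurable_const.mul Complex.measurable_ofReal)
    have h1 : g = (fun v : ℝ => Complex.exp (Complex.I * v)) ∘ (f' (Sum.inr (Sum.inr n))) := by
      funext ω
      rfl
    rw [h1, ← Measure.map_map hexpI (hf'meas _)]
    congr 1
    rw [← Measure.map_congr (hf'eq (Sum.inr (Sum.inr n)))]
    exact hV n
  -- the good set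
  have hgood : ∀ᵐ ω ∂μ, (∀ j : ℕ, B j ω = f' (Sum.inl j) ω) ∧
      ((∀ j : ℕ, U j ω = f' (Sum.inr (Sum.inl j)) ω) ∧
        V n ω = f' (Sum.inr (Sum.inr n)) ω) := by
    refine Filter.Eventually.and ?_ (Filter.Eventually.and ?_ ?_)
    · rw [MeasureTheory.ae_all_iff]
      exact fun j => hf'eq (Sum.inl j)
    · rw [MeasureTheory.ae_all_iff]
      exact fun j => hf'eq (Sum.inr (Sum.inl j))
    · exact hf'eq (Sum.inr (Sum.inr n))
  set Sgood : Set Ω := {ω | (∀ j : ℕ, B j ω = f' (Sum.inl j) ω) ∧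
      ((∀ j : ℕ, U j ω = f' (Sum.inr (Sum.inl j)) ω) ∧
        V n ω = f' (Sum.inr (Sum.inr n)) ω)} with hSgood
  have hSgoodnull : μ Sgoodᶜ = 0 := by
    rw [hSgood]
    exact MeasureTheory.ae_iff.mp hgood
  -- inclusion of the event
  have hsub : {ω | M ≤
        |(⨆ z : Metric.sphere (0:ℂ) 1, Real.log (norm
            ((szego (fun j => (Real.sqrt (B j ω) : ℂ) *
                Complex.exp (Complex.I * (U j ω))) m).2 (z:ℂ)
              - Complex.exp (Complex.I * (V n ω)) * (z:ℂ) *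
                (szego (fun j => (Real.sqrt (B j ω) : ℂ) *
                  Complex.exp (Complex.I * (U j ω))) m).1 (z:ℂ))))
          - (⨆ z : Metric.sphere (0:ℂ) 1, Real.log (norm
            ((szego (fun j => (Real.sqrt (B j ω) : ℂ) *
                Complex.exp (Complex.I * (U j ω))) m).2 (z:ℂ))))|}
      ⊆ {ω | norm (1 - g ω * W ω) ≤ δ} ∪ Sgoodᶜ := by
    intro ω hω
    by_cases hgω : ω ∈ Sgood
    · left
      obtain ⟨hgB, hgU, hgV⟩ := hgω
      set a : ℕ → ℂ := fun j => (Real.sqrt (f' (Sum.inl j) ω) : ℂ) *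
        Complex.exp (Complex.I * (f' (Sum.inr (Sum.inl j)) ω : ℝ)) with ha
      set v : ℝ := f' (Sum.inr (Sum.inr n)) ω with hv
      have hα : (fun j => (Real.sqrt (B j ω) : ℂ) *
          Complex.exp (Complex.I * (U j ω))) = a := by
        funext j
        rw [ha, hgB j, hgU j]
      have hres : M ≤
          |(⨆ z : Metric.sphere (0:ℂ) 1, Real.log (norm
              ((szego a m).2 (z:ℂ) - Complex.exp (Complex.I * (v:ℝ)) * (z:ℂ) *
                (szego a m).1 (z:ℂ))))
            - (⨆ z : Metric.sphere (0:ℂ) 1, Real.log (norm ((szego a m).2 (z:ℂ))))| := by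
        have hω' := hω
        simp only [Set.mem_setOf_eq] at hω'
        rw [hα, hgV] at hω'
        exact hω'
      have hcore := core a m v M hM2 hres
      have hWω : W ω = wOf (szego a m) := by
        show wOf (szego (aOf (fun i : {x // x ∈ S} => f' i ω)) m) = wOf (szego a m)
        have hsz : szego (aOf (fun i : {x // x ∈ S} => f' i ω)) m = szego a m := by
          apply szego_congr
          intro j hj
          simp only [haOf, ha, dif_pos hj]
        rw [hsz]
      have hgω' : g ω = Complex.exp (Complex.I * (v:ℝ)) := rfl
      show norm (1 - g ω * W ω) ≤ δ
      rw [hgω', hWω]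
      exact le_trans hcore hMδ
    · right
      exact hgω
  -- final estimate
  calc μ _ ≤ μ ({ω | norm (1 - g ω * W ω) ≤ δ} ∪ Sgoodᶜ) := measure_mono hsub
    _ ≤ μ {ω | norm (1 - g ω * W ω) ≤ δ} + μ Sgoodᶜ := measure_union_le _ _
    _ = μ {ω | norm (1 - g ω * W ω) ≤ δ} := by rw [hSgoodnull, add_zero]
    _ ≤ ENNReal.ofReal ((2/Real.pi) * Real.arccos (1 - δ^2/2)) :=
        key_prob μ W g hWmeas hgmeas hIndWg hWunit hlawg hδ2
    _ ≤ ENNReal.ofReal ε := ENNReal.ofReal_le_ofReal hδε.le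
end

section
/- For every k ≥ 0 and every θ ∈ ℝ, one has Φ*_k(e^{iθ}) = ∏_{j=0}^{k−1} (1 − α_j·e^{i·Ψ_j(θ)}); in particular Φ*_k(e^{iθ}) ≠ 0. -/
/-- The Prüfer phases: `Ψ_0(θ) = θ` and
`Ψ_{j+1}(θ) = Ψ_j(θ) + θ − 2 Im Log(1 − α_j e^{i Ψ_j(θ)})`, i.e.
`Ψ_j(θ) = (j+1)θ − 2 ∑_{i<j} Im Log(1 − α_i e^{i Ψ_i(θ)})`. -/
noncomputable def pruferPhase (α : ℕ → ℂ) (θ : ℝ) : ℕ → ℝ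
  | 0 => θ
  | j + 1 => pruferPhase α θ j + θ -
      2 * (Complex.log (1 - α j * Complex.exp (Complex.I * (pruferPhase α θ j : ℝ)))).im

lemma key_conj (w : ℂ) :
    Complex.exp (Complex.I * (-(2 * (Complex.log w).im) : ℝ)) * w = (starRingEnd ℂ) w := by
  rcases eq_or_ne w 0 with h | h
  · simp [h]
  rw [Complex.log_im]
  set a := w.arg with ha
  set r := ‖w‖ with hr
  have hw2 : w = (r : ℂ) * Complex.exp (a * Complex.I) := (Complex.norm_mul_exp_arg_mul_I w).symm
  rw [hw2, map_mul, ← Complex.exp_conj]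
  have hc : (starRingEnd ℂ) ((a : ℂ) * Complex.I) = -(a : ℂ) * Complex.I := by
    simp [Complex.conj_ofReal]
  have hcr : (starRingEnd ℂ) ((r : ℂ)) = (r : ℂ) := Complex.conj_ofReal r
  rw [hc, hcr, mul_comm (Complex.exp (Complex.I * ((-(2 * a) : ℝ) : ℂ))), mul_assoc,
    ← Complex.exp_add]
  congr 2
  push_cast
  ring

lemma factor_ne (α : ℕ → ℂ) (hα : ∀ j, ‖α j‖ < 1) (θ : ℝ) (j : ℕ) :
    1 - α j * Complex.exp (Complex.I * (pruferPhase α θ j : ℝ)) ≠ 0 := by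
  intro h
  have h1 : (1 : ℂ) = α j * Complex.exp (Complex.I * (pruferPhase α θ j : ℝ)) :=
    by linear_combination h
  have : ‖α j * Complex.exp (Complex.I * (pruferPhase α θ j : ℝ))‖ = ‖α j‖ := by
    rw [norm_mul, Complex.norm_exp]
    simp
  rw [← h1] at this
  simp at this
  exact absurd this.symm (ne_of_lt (hα j))

lemma szego_aux (α : ℕ → ℂ) (hα : ∀ j, ‖α j‖ < 1) (θ : ℝ) (k : ℕ) :
    (szego α k).2 (Complex.exp (Complex.I * θ)) =
        ∏ j ∈ Finset.range k,
          (1 - α j * Complex.exp (Complex.I * (pruferPhase α θ j : ℝ))) ∧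
    Complex.exp (Complex.I * θ) * (szego α k).1 (Complex.exp (Complex.I * θ)) =
        Complex.exp (Complex.I * (pruferPhase α θ k : ℝ)) *
          ∏ j ∈ Finset.range k,
            (1 - α j * Complex.exp (Complex.I * (pruferPhase α θ j : ℝ))) := by
  induction k with
  | zero => simp [szego, pruferPhase]
  | succ k ih =>
    obtain ⟨h1, h2⟩ := ih
    set z := Complex.exp (Complex.I * θ) with hz
    set e := Complex.exp (Complex.I * (pruferPhase α θ k : ℝ)) with he
    set P := ∏ j ∈ Finset.range k,
        (1 - α j * Complex.exp (Complex.I * (pruferPhase α θ j : ℝ))) with hP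
    set w := 1 - α k * e with hw
    have hprod : ∏ j ∈ Finset.range (k+1),
        (1 - α j * Complex.exp (Complex.I * (pruferPhase α θ j : ℝ))) = P * w := by
      rw [Finset.prod_range_succ]
    have hexp : Complex.exp (Complex.I * (pruferPhase α θ (k+1) : ℝ)) =
        e * z * Complex.exp (Complex.I * (-(2 * (Complex.log w).im) : ℝ)) := by
      rw [he, hz, ← Complex.exp_add, ← Complex.exp_add]
      congr 1
      show Complex.I * ((pruferPhase α θ k + θ -
        2 * (Complex.log (1 - α k * Complex.exp (Complex.I * (pruferPhase α θ k : ℝ)))).im : ℝ)) = _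
      rw [← he, ← hw]
      push_cast
      ring
    have hconjE : e * (starRingEnd ℂ) e = 1 := by
      rw [he, ← Complex.exp_conj, ← Complex.exp_add]
      have : (starRingEnd ℂ) (Complex.I * (pruferPhase α θ k : ℝ)) =
          -(Complex.I * (pruferPhase α θ k : ℝ)) := by
        simp [Complex.conj_ofReal]
      rw [this]
      simp
    constructor
    · show (szego α k).2 z - α k * z * (szego α k).1 z = _
      rw [hprod, h1, hw]
      linear_combination (-(α k)) * h2
    · show z * (z * (szego α k).1 z - (starRingEnd ℂ) (α k) * (szego α k).2 z) = _
      rw [h1, hprod, hexp]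
      have hkey := key_conj w
      have hconjw : (starRingEnd ℂ) w = 1 - (starRingEnd ℂ) (α k) * (starRingEnd ℂ) e := by
        rw [hw]; simp
      have hthis : Complex.exp (Complex.I * (-(2 * (Complex.log w).im) : ℝ)) * w =
          1 - (starRingEnd ℂ) (α k) * (starRingEnd ℂ) e := by rw [hkey, hconjw]
      linear_combination z * h2 - e * z * P * hthis +
        z * (starRingEnd ℂ) (α k) * P * hconjE

/-- For every `k` and `θ`, `Φ*_k(e^{iθ}) = ∏_{j<k} (1 − α_j e^{i Ψ_j(θ)})`;
in particular `Φ*_k(e^{iθ}) ≠ 0`. -/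
theorem phiStar_eq_prod_prufer (α : ℕ → ℂ) (hα : ∀ j, ‖α j‖ < 1)
    (k : ℕ) (θ : ℝ) :
    (szego α k).2 (Complex.exp (Complex.I * θ)) =
        ∏ j ∈ Finset.range k,
          (1 - α j * Complex.exp (Complex.I * (pruferPhase α θ j : ℝ))) ∧
      (szego α k).2 (Complex.exp (Complex.I * θ)) ≠ 0 := by
  have h := (szego_aux α hα θ k).1
  refine ⟨h, ?_⟩
  rw [h]
  exact Finset.prod_ne_zero_iff.mpr fun j _ => factor_ne α hα θ j
end

section
/- Let a, s, t be real numbers with a > 1/2 and s > 0. Then the complex number Γ(a)·Γ(a+s) / ( Γ(a + (s+it)/2) · Γ(a + (s−it)/2) ), where Γ is the complex Gamma function, is a real number lying in the interval [1, exp((s² + t²)/(4a − 2))]. -/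
open Filter Finset Topology

/-- For real `a > 1/2`, `s > 0` and `t` real, the quotient
`Γ(a)Γ(a+s) / (Γ(a+(s+it)/2)Γ(a+(s−it)/2))` is a real number in
`[1, exp((s²+t²)/(4a−2))]`. -/
theorem gamma_quotient_real_bounds (a s t : ℝ) (ha : 1 / 2 < a) (hs : 0 < s) :
    ∃ r : ℝ,
      (Complex.Gamma (a : ℂ) * Complex.Gamma ((a : ℂ) + (s : ℂ))) /
          (Complex.Gamma ((a : ℂ) + ((s : ℂ) + (t : ℂ) * Complex.I) / 2) *
            Complex.Gamma ((a : ℂ) + ((s : ℂ) - (t : ℂ) * Complex.I) / 2)) = (r : ℂ) ∧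
        r ∈ Set.Icc 1 (Real.exp ((s ^ 2 + t ^ 2) / (4 * a - 2))) := by
  have ha0 : (0:ℝ) < a := lt_trans (by norm_num) ha
  set z : ℂ := (a : ℂ) + ((s : ℂ) + (t : ℂ) * Complex.I) / 2 with hzdef
  set w : ℂ := (a : ℂ) + ((s : ℂ) - (t : ℂ) * Complex.I) / 2 with hwdef
  set A : ℝ := (s ^ 2 + t ^ 2) / 4 with hAdef
  have hA : 0 ≤ A := by positivity
  set B : ℝ := (s ^ 2 + t ^ 2) / (4 * a - 2) with hBdef
  set d : ℕ → ℝ := fun k => (a + k) * (a + k + s) with hddef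
  have hd : ∀ k : ℕ, (0:ℝ) < d k := by
    intro k
    have h1 : (0:ℝ) < a + k := by positivity
    have h2 : (0:ℝ) < a + k + s := by positivity
    exact mul_pos h1 h2
  set P : ℕ → ℝ := fun n => ∏ k ∈ range (n + 1), ((d k + A) / d k) with hPdef
  have hfac1 : ∀ k : ℕ, 1 ≤ (d k + A) / d k := by
    intro k
    rw [le_div_iff₀ (hd k)]
    linarith [hd k, hA]
  have hP1 : ∀ n, 1 ≤ P n := by
    intro n
    calc (1:ℝ) = ∏ k ∈ range (n + 1), 1 := by simp
    _ ≤ P n := Finset.prod_le_prod (by intro i _; norm_num) (fun i _ => hfac1 i)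
  have hPmono : Monotone P := by
    refine monotone_nat_of_le_succ fun n => ?_
    have : P (n + 1) = P n * ((d (n+1) + A) / d (n+1)) := by
      rw [hPdef]; exact Finset.prod_range_succ _ (n+1)
    rw [this]
    nlinarith [hP1 n, hfac1 (n+1), hd (n+1)]
  have ha2 : (0:ℝ) < a - 1/2 := by linarith
  have hPle : ∀ n, P n ≤ Real.exp B := by
    intro n
    have step1 : P n ≤ Real.exp (∑ k ∈ range (n + 1), A / d k) := by
      rw [Real.exp_sum]
      refine Finset.prod_le_prod (fun i _ => by positivity) (fun i _ => ?_)
      have : (d i + A) / d i = A / d i + 1 := by rw [add_div, div_self (hd i).ne']; ring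
      rw [this]
      exact Real.add_one_le_exp _
    have step2 : ∑ k ∈ range (n + 1), A / d k ≤ B := by
      have hpos1 : ∀ k : ℕ, (0:ℝ) < a + k - 1/2 := by
        intro k; have := Nat.cast_nonneg (α := ℝ) k; linarith
      have hterm : ∀ k : ℕ, A / d k ≤ A * (1 / (a + k - 1/2) - 1 / (a + k + 1/2)) := by
        intro k
        have h1 : (0:ℝ) < a + k - 1/2 := hpos1 k
        have h2 : (0:ℝ) < a + k + 1/2 := by positivity
        have hsub : 1 / (a + k - 1/2) - 1 / (a + k + 1/2)
            = 1 / ((a + k - 1/2) * (a + k + 1/2)) := by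
          rw [div_sub_div _ _ h1.ne' h2.ne']
          congr 1; ring
        rw [hsub, mul_one_div]
        refine div_le_div_of_nonneg_left hA (by positivity) ?_
        rw [hddef]
        nlinarith [hd k, Nat.cast_nonneg (α := ℝ) k, hs]
      have htel : ∑ k ∈ range (n + 1), (1 / (a + k - 1/2) - 1 / (a + k + 1/2))
          = 1 / (a - 1/2) - 1 / (a + (n+1) - 1/2) := by
        have key : ∀ i : ℕ, (1:ℝ) / (a + i - 1/2) - 1 / (a + i + 1/2)
            = (fun k : ℕ => 1 / (a + k - 1/2)) i - (fun k : ℕ => 1 / (a + k - 1/2)) (i+1) := by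
          intro i; simp only; push_cast; ring_nf
        rw [Finset.sum_congr rfl fun i _ => key i, Finset.sum_range_sub']
        norm_num
      calc ∑ k ∈ range (n + 1), A / d k
          ≤ ∑ k ∈ range (n + 1), A * (1 / (a + k - 1/2) - 1 / (a + k + 1/2)) :=
            Finset.sum_le_sum (fun i _ => hterm i)
        _ = A * (1 / (a - 1/2) - 1 / (a + (n+1) - 1/2)) := by rw [← Finset.mul_sum, htel]
        _ ≤ A * (1 / (a - 1/2)) := by
            have h2 : (0:ℝ) < a + (n+1) - 1/2 := by
              have := hpos1 (n+1); push_cast at this; linarith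
            have h3 : (0:ℝ) ≤ 1 / (a + (n+1) - 1/2) := by positivity
            nlinarith
        _ = B := by
            rw [mul_one_div, hAdef, hBdef, div_div]
            congr 1
            ring
    exact step1.trans (Real.exp_le_exp.mpr step2)
  have hbdd : BddAbove (Set.range P) := ⟨Real.exp B, by rintro x ⟨n, rfl⟩; exact hPle n⟩
  set r : ℝ := ⨆ n, P n with hrdef
  have hPr : Tendsto P atTop (𝓝 r) := tendsto_atTop_ciSup hPmono hbdd
  have hr1 : 1 ≤ r := le_trans (hP1 0) (le_ciSup hbdd 0)
  have hrB : r ≤ Real.exp B := ciSup_le hPle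
  refine ⟨r, ?_, hr1, hrB⟩
  have hzre : 0 < z.re := by
    rw [hzdef]
    simp [Complex.add_re, Complex.div_re, Complex.normSq]
    nlinarith
  have hwre : 0 < w.re := by
    rw [hwdef]
    simp [Complex.add_re, Complex.div_re, Complex.normSq]
    nlinarith
  have hGz := Complex.Gamma_ne_zero_of_re_pos hzre
  have hGw := Complex.Gamma_ne_zero_of_re_pos hwre
  have hlim : Tendsto (fun n => Complex.GammaSeq (a:ℂ) n * Complex.GammaSeq ((a:ℂ)+(s:ℂ)) n /
      (Complex.GammaSeq z n * Complex.GammaSeq w n)) atTop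
      (𝓝 (Complex.Gamma (a:ℂ) * Complex.Gamma ((a:ℂ)+(s:ℂ)) /
        (Complex.Gamma z * Complex.Gamma w))) :=
    ((Complex.GammaSeq_tendsto_Gamma _).mul (Complex.GammaSeq_tendsto_Gamma _)).div
      ((Complex.GammaSeq_tendsto_Gamma _).mul (Complex.GammaSeq_tendsto_Gamma _))
      (mul_ne_zero hGz hGw)
  have hlim2 : Tendsto (fun n => ((P n : ℝ) : ℂ)) atTop (𝓝 ((r : ℂ))) :=
    (Complex.continuous_ofReal.tendsto _).comp hPr
  have hEq : ∀ᶠ n in atTop, Complex.GammaSeq (a:ℂ) n * Complex.GammaSeq ((a:ℂ)+(s:ℂ)) n /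
      (Complex.GammaSeq z n * Complex.GammaSeq w n) = ((P n : ℝ) : ℂ) := by
    filter_upwards [eventually_ge_atTop 1] with n hn
    have hn0 : (n:ℂ) ≠ 0 := by exact_mod_cast Nat.one_le_iff_ne_zero.mp hn
    have hpow : (n:ℂ) ^ (a:ℂ) * (n:ℂ) ^ ((a:ℂ)+(s:ℂ)) = (n:ℂ) ^ z * (n:ℂ) ^ w := by
      rw [← Complex.cpow_add _ _ hn0, ← Complex.cpow_add _ _ hn0]
      congr 1
      rw [hzdef, hwdef]; ring
    have hfact : ((n.factorial : ℕ) : ℂ) ≠ 0 := by exact_mod_cast Nat.factorial_ne_zero n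
    have hterm : ∀ j : ℕ, (z + j) * (w + j) = ((d j + A : ℝ) : ℂ) := by
      intro j
      rw [hzdef, hwdef, hddef, hAdef]
      push_cast
      ring_nf
      rw [Complex.I_sq]
      ring
    have hPprod : ((P n : ℝ) : ℂ) = (∏ j ∈ range (n+1), ((z + j) * (w + j))) /
        (∏ j ∈ range (n+1), (((a:ℂ) + j) * (((a:ℂ)+(s:ℂ)) + j))) := by
      rw [hPdef]
      push_cast
      rw [Finset.prod_div_distrib]
      congr 1
      · exact Finset.prod_congr rfl fun j _ => by rw [hterm j]; push_cast; ring
      · refine Finset.prod_congr rfl fun j _ => ?_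
        rw [hddef]; push_cast; ring
    rw [hPprod]
    simp only [Complex.GammaSeq]
    rw [Finset.prod_mul_distrib, Finset.prod_mul_distrib]
    set Da : ℂ := ∏ j ∈ range (n+1), ((a:ℂ) + j) with hDa
    set Db : ℂ := ∏ j ∈ range (n+1), (((a:ℂ)+(s:ℂ)) + j) with hDb
    set Dz : ℂ := ∏ j ∈ range (n+1), (z + j) with hDz
    set Dw : ℂ := ∏ j ∈ range (n+1), (w + j) with hDw
    rw [div_mul_div_comm, div_mul_div_comm, div_div_div_eq]
    have hcz : (n:ℂ) ^ z ≠ 0 := fun h => hn0 ((Complex.cpow_eq_zero_iff _ _).mp h).1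
    have hcw : (n:ℂ) ^ w ≠ 0 := fun h => hn0 ((Complex.cpow_eq_zero_iff _ _).mp h).1
    have hX : (n:ℂ) ^ z * ((n.factorial : ℕ) : ℂ) * ((n:ℂ) ^ w * ((n.factorial : ℕ) : ℂ)) ≠ 0 :=
      mul_ne_zero (mul_ne_zero hcz hfact) (mul_ne_zero hcw hfact)
    have key : (n:ℂ) ^ (a:ℂ) * ((n.factorial : ℕ) : ℂ) * ((n:ℂ) ^ ((a:ℂ)+(s:ℂ)) * ((n.factorial : ℕ) : ℂ))
        = (n:ℂ) ^ z * ((n.factorial : ℕ) : ℂ) * ((n:ℂ) ^ w * ((n.factorial : ℕ) : ℂ)) := by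
      linear_combination (((n.factorial : ℕ) : ℂ) * ((n.factorial : ℕ) : ℂ)) * hpow
    rw [key, mul_comm (Da * Db), mul_div_mul_left _ _ hX]
  have hfinal := tendsto_nhds_unique (hlim.congr' hEq) hlim2
  rw [hzdef, hwdef] at hfinal
  exact hfinal
end

section
/- Let k ≥ 1 and let ω_1,…,ω_k be complex numbers with |ω_j| < 1 for all j. Define F(θ) = ∑_{j=1}^k arg(1 − ω_j·e^{iθ}), where arg is the principal argument (each term lies in (−π/2, π/2) since Re(1 − ω_j·e^{iθ}) > 0). Then sup_{θ ∈ ℝ} F(θ) ≤ 2π + max_{0 ≤ m < k} F(2πm/k). (F is the continuous version, vanishing at the appropriate branch, of Im log Q(e^{iθ}) for the polynomial Q(z) = ∏_{j=1}^k (1 − ω_j·z), which satisfies Q(0) = 1 and has no zeros in the closed unit disk.) -/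
open Complex Real

private lemma arg_eq_arctan' {z : ℂ} (hz : 0 < z.re) :
    Complex.arg z = Real.arctan (z.im / z.re) := by
  have h := Complex.abs_arg_lt_pi_div_two_iff.mpr (Or.inl hz)
  rw [← Complex.tan_arg, Real.arctan_tan (abs_lt.mp h).1 (abs_lt.mp h).2]

private lemma re_pos' {w : ℂ} (hw : ‖w‖ < 1) (θ : ℝ) :
    0 < (1 - w * Complex.exp (Complex.I * θ)).re := by
  have h1 : ‖w * Complex.exp (Complex.I * θ)‖ = ‖w‖ := by
    rw [norm_mul, Complex.norm_exp]
    simp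
  have h2 : (w * Complex.exp (Complex.I * θ)).re ≤ ‖w‖ := by
    rw [← h1]; exact Complex.re_le_norm _
  simp only [Complex.sub_re, Complex.one_re]
  linarith

private lemma key_mono {w : ℂ} (hw : ‖w‖ < 1) :
    Monotone (fun θ : ℝ => θ / 2 - Complex.arg (1 - w * Complex.exp (Complex.I * θ))) := by
  have heq : (fun θ : ℝ => θ / 2 - Complex.arg (1 - w * Complex.exp (Complex.I * θ)))
      = fun θ : ℝ => θ / 2 - Real.arctan ((1 - w * Complex.exp (Complex.I * θ)).im /
        (1 - w * Complex.exp (Complex.I * θ)).re) := by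
    funext θ; rw [arg_eq_arctan' (re_pos' hw θ)]
  rw [heq]
  have hD : ∀ θ : ℝ, ∃ d : ℝ, 0 ≤ d ∧ HasDerivAt (fun t : ℝ => t / 2 -
      Real.arctan ((1 - w * Complex.exp (Complex.I * t)).im /
        (1 - w * Complex.exp (Complex.I * t)).re)) d θ := by
    intro θ
    have hcoe : HasDerivAt (fun t : ℝ => (t : ℂ)) 1 θ := by
      simpa using (hasDerivAt_id θ).ofReal_comp
    have hexp : HasDerivAt (fun t : ℝ => Complex.exp (Complex.I * t))
        (Complex.exp (Complex.I * θ) * Complex.I) θ := by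
      simpa using (hcoe.const_mul Complex.I).cexp
    have hc : HasDerivAt (fun t : ℝ => 1 - w * Complex.exp (Complex.I * t))
        (-(w * (Complex.exp (Complex.I * θ) * Complex.I))) θ := by
      simpa using (hexp.const_mul w).const_sub 1
    have ha : HasDerivAt (fun t : ℝ => (1 - w * Complex.exp (Complex.I * t)).re)
        ((-(w * (Complex.exp (Complex.I * θ) * Complex.I))).re) θ := by
      simpa [Function.comp_def] using (Complex.reCLM.hasFDerivAt.comp θ hc.hasFDerivAt).hasDerivAt
    have hb : HasDerivAt (fun t : ℝ => (1 - w * Complex.exp (Complex.I * t)).im)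
        ((-(w * (Complex.exp (Complex.I * θ) * Complex.I))).im) θ := by
      simpa [Function.comp_def] using (Complex.imCLM.hasFDerivAt.comp θ hc.hasFDerivAt).hasDerivAt
    have ha0 : 0 < (1 - w * Complex.exp (Complex.I * θ)).re := re_pos' hw θ
    have hq : HasDerivAt (fun t : ℝ => (1 - w * Complex.exp (Complex.I * t)).im /
        (1 - w * Complex.exp (Complex.I * t)).re)
        (((-(w * (Complex.exp (Complex.I * θ) * Complex.I))).im *
            (1 - w * Complex.exp (Complex.I * θ)).re -
          (1 - w * Complex.exp (Complex.I * θ)).im *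
            (-(w * (Complex.exp (Complex.I * θ) * Complex.I))).re) /
          ((1 - w * Complex.exp (Complex.I * θ)).re) ^ 2) θ :=
      hb.div ha (ne_of_gt ha0)
    have harctan := (Real.hasDerivAt_arctan ((1 - w * Complex.exp (Complex.I * θ)).im /
        (1 - w * Complex.exp (Complex.I * θ)).re)).comp θ hq
    have hhalf : HasDerivAt (fun t : ℝ => t / 2) (1 / 2 : ℝ) θ := by
      simpa using (hasDerivAt_id θ).div_const 2
    refine ⟨_, ?_, hhalf.sub harctan⟩
    -- positivity of the derivative
    set u : ℝ := (w * Complex.exp (Complex.I * θ)).re with hu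
    set v : ℝ := (w * Complex.exp (Complex.I * θ)).im with hv
    have hre : (1 - w * Complex.exp (Complex.I * θ)).re = 1 - u := by
      simp [hu, Complex.sub_re]
    have him : (1 - w * Complex.exp (Complex.I * θ)).im = -v := by
      simp [hv, Complex.sub_im]
    have hre' : (-(w * (Complex.exp (Complex.I * θ) * Complex.I))).re = v := by
      simp [hv, ← mul_assoc, Complex.mul_re, Complex.I_re, Complex.I_im]
    have him' : (-(w * (Complex.exp (Complex.I * θ) * Complex.I))).im = -u := by
      simp [hu, ← mul_assoc, Complex.mul_im, Complex.I_re, Complex.I_im]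
    have hsq : u ^ 2 + v ^ 2 < 1 := by
      have h1 : ‖w * Complex.exp (Complex.I * θ)‖ = ‖w‖ := by
        rw [norm_mul, Complex.norm_exp]; simp
      have h2 := Complex.sq_norm (w * Complex.exp (Complex.I * θ))
      rw [h1, Complex.normSq_apply] at h2
      have := norm_nonneg w
      nlinarith [hw]
    rw [hre, him, hre', him'] at *
    have hne : (1 - u) ≠ 0 := by nlinarith
    have hab : 0 < (1 - u) ^ 2 + (-v) ^ 2 := by nlinarith [sq_nonneg v]
    have hq2 : (1 : ℝ) + ((-v) / (1 - u)) ^ 2 = ((1 - u) ^ 2 + (-v) ^ 2) / (1 - u) ^ 2 := by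
      field_simp
    have hval : (1 / (1 + ((-v) / (1 - u)) ^ 2)) *
        ((-u * (1 - u) - -v * v) / (1 - u) ^ 2) =
        (-u * (1 - u) - -v * v) / ((1 - u) ^ 2 + (-v) ^ 2) := by
      rw [hq2]
      field_simp
    rw [hval]
    rw [sub_nonneg, div_le_iff₀ hab]
    nlinarith
  apply monotone_of_deriv_nonneg
  · intro θ; obtain ⟨d, _, hd⟩ := hD θ; exact hd.differentiableAt
  · intro θ; obtain ⟨d, hd0, hd⟩ := hD θ; rw [hd.deriv]; exact hd0

/-- For `|ω_j| < 1`, `j = 1,…,k`, and `F(θ) = ∑_j arg(1 − ω_j e^{iθ})`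
(the continuous argument of `Q(e^{iθ})` for `Q(z) = ∏ (1 − ω_j z)`),
`sup_θ F(θ) ≤ 2π + max_{0 ≤ m < k} F(2πm/k)`. -/
theorem sup_arg_le_grid_max (k : ℕ) (hk : 1 ≤ k) (w : Fin k → ℂ)
    (hw : ∀ j, ‖w j‖ < 1) (θ : ℝ) :
    (∑ j, Complex.arg (1 - w j * Complex.exp (Complex.I * θ))) ≤
      2 * Real.pi + ⨆ m : Fin k,
        ∑ j, Complex.arg (1 - w j * Complex.exp (Complex.I * (2 * Real.pi * m / k : ℝ))) := by
  have hkpos : (0:ℝ) < k := by exact_mod_cast hk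
  have hpi := Real.pi_pos
  set F : ℝ → ℝ := fun t => ∑ j, Complex.arg (1 - w j * Complex.exp (Complex.I * t)) with hF
  -- monotonicity of k*t/2 - F t
  have hs : ∀ x : ℝ, (k:ℝ) * x / 2 - F x =
      ∑ j : Fin k, (x / 2 - Complex.arg (1 - w j * Complex.exp (Complex.I * x))) := by
    intro x
    rw [Finset.sum_sub_distrib, Finset.sum_const, Finset.card_univ, Fintype.card_fin]
    simp [hF]
    ring
  have hmono : ∀ s t : ℝ, s ≤ t → (k:ℝ) * s / 2 - F s ≤ (k:ℝ) * t / 2 - F t := by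
    intro s t hst
    rw [hs s, hs t]
    exact Finset.sum_le_sum fun j _ => key_mono (hw j) hst
  -- periodicity
  have hper : ∀ (t : ℝ) (n : ℤ), F (t + 2 * Real.pi * n) = F t := by
    intro t n
    apply Finset.sum_congr rfl
    intro j _
    have : Complex.exp (Complex.I * ((t : ℝ) + 2 * Real.pi * n : ℝ)) =
        Complex.exp (Complex.I * t) := by
      push_cast
      rw [mul_add, Complex.exp_add,
        show Complex.I * (2 * (Real.pi:ℂ) * n) = (n:ℂ) * (2 * Real.pi * Complex.I) by ring,
        Complex.exp_int_mul_two_pi_mul_I, mul_one]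
    rw [this]
  -- reduce to θ' ∈ [0, 2π)
  set n : ℤ := ⌊θ / (2 * Real.pi)⌋ with hn
  set θ' : ℝ := θ - 2 * Real.pi * n with hθ'
  have h2pi : (0:ℝ) < 2 * Real.pi := by linarith
  have hθ'0 : 0 ≤ θ' := by
    have := Int.floor_le (θ / (2 * Real.pi))
    rw [hθ']
    have : (n:ℝ) * (2 * Real.pi) ≤ θ := by
      rw [hn]
      calc (⌊θ / (2 * Real.pi)⌋ : ℝ) * (2 * Real.pi) ≤ θ / (2 * Real.pi) * (2 * Real.pi) := by
            apply mul_le_mul_of_nonneg_right (Int.floor_le _) h2pi.le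
        _ = θ := by field_simp
    linarith
  have hθ'1 : θ' < 2 * Real.pi := by
    have h1 : θ / (2 * Real.pi) < n + 1 := Int.lt_floor_add_one _
    have h2 : θ < ((n:ℝ) + 1) * (2 * Real.pi) := by
      calc θ = θ / (2 * Real.pi) * (2 * Real.pi) := by field_simp
        _ < ((n:ℝ) + 1) * (2 * Real.pi) := by
            apply mul_lt_mul_of_pos_right h1 h2pi
    rw [hθ']; nlinarith
  have hFθ : F θ = F θ' := by
    have h := hper θ' n
    rw [show θ' + 2 * Real.pi * n = θ by rw [hθ']; ring] at h
    exact h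
  -- the grid point
  set m : ℕ := (⌊θ' * k / (2 * Real.pi)⌋).toNat with hm
  have h0 : (0:ℤ) ≤ ⌊θ' * k / (2 * Real.pi)⌋ := Int.floor_nonneg.mpr (by positivity)
  have hcast : (m : ℝ) = ((⌊θ' * (k:ℝ) / (2 * Real.pi)⌋ : ℤ) : ℝ) := by
    rw [hm]; exact_mod_cast Int.toNat_of_nonneg h0
  have hmle : (m:ℝ) ≤ θ' * k / (2 * Real.pi) := by
    rw [hcast]; exact Int.floor_le _
  have hmlt : θ' * k / (2 * Real.pi) < m + 1 := by
    rw [hcast]; exact Int.lt_floor_add_one _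
  have hmk : m < k := by
    by_contra h
    push_neg at h
    have : (k:ℝ) ≤ (m:ℝ) := by exact_mod_cast h
    have hlt : θ' * k / (2 * Real.pi) < k := by
      rw [div_lt_iff₀ h2pi]
      calc θ' * k < 2 * Real.pi * k := by
            apply mul_lt_mul_of_pos_right hθ'1 hkpos
        _ = (k:ℝ) * (2 * Real.pi) := by ring
    linarith
  set g : ℝ := 2 * Real.pi * m / k with hg
  have hgle : g ≤ θ' := by
    rw [hg, div_le_iff₀ hkpos]
    have h := (le_div_iff₀ h2pi).mp hmle
    linarith
  have hgap : θ' - g ≤ 2 * Real.pi / k := by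
    rw [hg]
    rw [div_lt_iff₀ h2pi] at hmlt
    rw [sub_le_iff_le_add, ← add_div, le_div_iff₀ hkpos]
    nlinarith
  -- combine
  have h1 : F θ' ≤ F g + (k:ℝ) * (θ' - g) / 2 := by
    have := hmono g θ' hgle
    linarith
  have h2 : (k:ℝ) * (θ' - g) / 2 ≤ Real.pi := by
    have : (k:ℝ) * (θ' - g) ≤ (k:ℝ) * (2 * Real.pi / k) :=
      mul_le_mul_of_nonneg_left hgap hkpos.le
    have heq : (k:ℝ) * (2 * Real.pi / k) = 2 * Real.pi := by field_simp
    linarith [heq ▸ this]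
  have h3 : F g ≤ ⨆ m : Fin k,
      ∑ j, Complex.arg (1 - w j * Complex.exp (Complex.I * (2 * Real.pi * m / k : ℝ))) := by
    have hb : BddAbove (Set.range fun m : Fin k =>
        ∑ j, Complex.arg (1 - w j * Complex.exp (Complex.I * (2 * Real.pi * m / k : ℝ)))) :=
      Set.Finite.bddAbove (Set.finite_range _)
    have := le_ciSup hb (⟨m, hmk⟩ : Fin k)
    simpa [hF, hg] using this
  calc F θ = F θ' := hFθ
    _ ≤ F g + (k:ℝ) * (θ' - g) / 2 := h1
    _ ≤ F g + Real.pi := by linarith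
    _ ≤ 2 * Real.pi + ⨆ m : Fin k,
        ∑ j, Complex.arg (1 - w j * Complex.exp (Complex.I * (2 * Real.pi * m / k : ℝ))) := by
      linarith
end
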